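/- Let 𝓗 be a class of pointed (Π,ℛ)-models definable by a first-order theory T. If a (Π,ℛ)-automaton A converges in 𝓗 (i.e., accepts or rejects every pointed model in 𝓗), then A specifies a local algorithm in 𝓗: there exists n ∈ ℕ such that A accepts or rejects every (M,w) ∈ 𝓗 within n rounds. -/

import Mathlib

/-- Formulae of modal logic ML(Π,ℛ): `P` indexes unary predicate symbols,
`R` indexes binary relation symbols (modalities). -/
inductive MF (P R : Type) : Type
  | top : MF P R
  | atom : P → MF P R
  | neg : MF P R → MF P R
  | and : MF P R → MF P R → MF P R
  | dia : R → MF P R → MF P R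

/-- A (Π,ℛ)-Kripke model with domain `W`. -/
structure KModel (P R W : Type) where
  val : P → W → Prop
  rel : R → W → W → Prop

/-- Satisfaction for modal logic. -/
def msat {P R W : Type} (M : KModel P R W) : W → MF P R → Prop
  | _, .top => True
  | w, .atom p => M.val p w
  | w, .neg φ => ¬ msat M w φ
  | w, .and φ ψ => msat M w φ ∧ msat M w ψ
  | w, .dia r φ => ∃ v, M.rel r w v ∧ msat M v φ

/-- Abstract representation of (Π,ℛ,n)-types: a depth-0 type records the set of
unary predicates holding at a point; a depth-(n+1) type records a depth-n type
together with, for each modality, the set of depth-n types realized at successors. -/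
def TypeN (P R : Type) : ℕ → Type
  | 0 => Set P
  | n+1 => TypeN P R n × (R → Set (TypeN P R n))

/-- A pointed model `(M,w)` satisfies the (Π,ℛ,n)-type `τ`. -/
def satT {P R W : Type} (M : KModel P R W) : (n : ℕ) → W → TypeN P R n → Prop
  | 0, w, τ => ∀ p, M.val p w ↔ τ p
  | n+1, w, τ => satT M n w τ.1 ∧
      ∀ r σ, ((∃ v, M.rel r w v ∧ satT M n v σ) ↔ τ.2 r σ)

/-- The (Π,ℛ,n)-type of a pointed model `(M,w)`. -/
def typeOf {P R W : Type} (M : KModel P R W) : (n : ℕ) → W → TypeN P R n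
  | 0, w => fun p => M.val p w
  | n+1, w => ⟨typeOf M n w, fun r σ => ∃ v, M.rel r w v ∧ typeOf M n v = σ⟩

/-- A synchronized message passing (Π,ℛ)-automaton with states `Q` and messages `Msg`. -/
structure MPA (P R Q Msg : Type) where
  init : Set P → Q
  trans : (R → Set Msg) → Q → Q
  msgf : Q → R → Msg
  accept : Set Q
  reject : Set Q

/-- The state of automaton `A` at node `w` of model `M` in round `n`. -/
def MPA.run {P R W Q Msg : Type} (A : MPA P R Q Msg) (M : KModel P R W) : ℕ → W → Q
  | 0, w => A.init {p | M.val p w}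
  | n+1, w =>
      A.trans (fun r => {m | ∃ v, M.rel r w v ∧ m = A.msgf (A.run M n v) r}) (A.run M n w)

/-- `A` accepts `(M,w)` in round `n`. -/
def MPA.acceptsAt {P R W Q Msg : Type} (A : MPA P R Q Msg) (M : KModel P R W)
    (w : W) (n : ℕ) : Prop :=
  A.run M n w ∈ A.accept ∧ ∀ m < n, A.run M m w ∉ A.reject

/-- `A` rejects `(M,w)` in round `n`. -/
def MPA.rejectsAt {P R W Q Msg : Type} (A : MPA P R Q Msg) (M : KModel P R W)
    (w : W) (n : ℕ) : Prop :=
  A.run M n w ∈ A.reject ∧ ∀ m < n, A.run M m w ∉ A.accept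

/-- `A` accepts the pointed model `(M,w)`. -/
def MPA.accepts {P R W Q Msg : Type} (A : MPA P R Q Msg) (M : KModel P R W) (w : W) : Prop :=
  ∃ n, A.acceptsAt M w n

/-- `A` rejects the pointed model `(M,w)`. -/
def MPA.rejects {P R W Q Msg : Type} (A : MPA P R Q Msg) (M : KModel P R W) (w : W) : Prop :=
  ∃ n, A.rejectsAt M w n

/-- Formulae of first-order logic FO(Π,ℛ) with variables indexed by ℕ. -/
inductive FO (P R : Type) : Type
  | top : FO P R
  | eq : ℕ → ℕ → FO P R
  | atom : P → ℕ → FO P R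
  | rel : R → ℕ → ℕ → FO P R
  | neg : FO P R → FO P R
  | and : FO P R → FO P R → FO P R
  | ex : ℕ → FO P R → FO P R

/-- First-order satisfaction under an assignment `f`. -/
def fsat {P R W : Type} (M : KModel P R W) : (ℕ → W) → FO P R → Prop
  | _, .top => True
  | f, .eq x y => f x = f y
  | f, .atom p x => M.val p (f x)
  | f, .rel r x y => M.rel r (f x) (f y)
  | f, .neg φ => ¬ fsat M f φ
  | f, .and φ ψ => fsat M f φ ∧ fsat M f ψ
  | f, .ex x φ => ∃ v, fsat M (Function.update f x v) φ

section Aux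

open Filter

instance instFiniteTypeN {P R : Type} [Finite P] [Finite R] : ∀ n, Finite (TypeN P R n)
  | 0 => inferInstanceAs (Finite (Set P))
  | n+1 =>
    have := instFiniteTypeN (P := P) (R := R) n
    inferInstanceAs (Finite (TypeN P R n × (R → Set (TypeN P R n))))

theorem ultra_exists_eq {T : Type} [Finite T] (U : Ultrafilter ℕ) (t : ℕ → T) :
    ∃ σ, ∀ᶠ i in ↑U, t i = σ := by
  by_contra h
  push_neg at h
  have h' : ∀ σ, ∀ᶠ i in ↑U, t i ≠ σ := fun σ => h σ
  have := (Filter.eventually_all.2 h').exists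
  obtain ⟨i, hi⟩ := this
  exact hi (t i) rfl

/-- run state is determined by the type. -/
theorem run_eq_of_typeOf {P R W W' Q Msg : Type} (A : MPA P R Q Msg)
    (M : KModel P R W) (M' : KModel P R W') :
    ∀ (n : ℕ) (w : W) (w' : W'), typeOf M n w = typeOf M' n w' →
      A.run M n w = A.run M' n w' := by
  intro n
  induction n with
  | zero =>
    intro w w' h
    exact congrArg A.init h
  | succ n ih =>
    intro w w' h
    have h1 : typeOf M n w = typeOf M' n w' := congrArg Prod.fst h
    have h2 : (fun r σ => ∃ v, M.rel r w v ∧ typeOf M n v = σ)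
        = (fun r σ => ∃ v, M'.rel r w' v ∧ typeOf M' n v = σ) := congrArg Prod.snd h
    show A.trans _ _ = A.trans _ _
    rw [ih w w' h1]
    congr 1
    funext r
    ext m
    constructor
    · rintro ⟨v, hv, rfl⟩
      have he : (∃ u, M'.rel r w' u ∧ typeOf M' n u = typeOf M n v) := by
        rw [← congrFun (congrFun h2 r) (typeOf M n v)]
        exact ⟨v, hv, rfl⟩
      obtain ⟨v', hv', ht⟩ := he
      exact ⟨v', hv', by rw [ih v v' ht.symm]⟩
    · rintro ⟨v, hv, rfl⟩
      have he : (∃ u, M.rel r w u ∧ typeOf M n u = typeOf M' n v) := by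
        rw [congrFun (congrFun h2 r) (typeOf M' n v)]
        exact ⟨v, hv, rfl⟩
      obtain ⟨v', hv', ht⟩ := he
      exact ⟨v', hv', by rw [ih v' v ht]⟩

variable {P R : Type} (U : Ultrafilter ℕ) {W : ℕ → Type}

def uSetoid (U : Ultrafilter ℕ) (W : ℕ → Type) : Setoid (∀ i, W i) where
  r f g := ∀ᶠ i in ↑U, f i = g i
  iseqv := ⟨fun _ => Eventually.of_forall fun _ => rfl,
    fun h => h.mono fun _ hi => hi.symm,
    fun h1 h2 => (h1.and h2).mono fun _ hi => hi.1.trans hi.2⟩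

abbrev UProd (U : Ultrafilter ℕ) (W : ℕ → Type) := Quotient (uSetoid U W)

variable (M : ∀ i, KModel P R (W i))

def uModel : KModel P R (UProd U W) where
  val p := Quotient.lift (fun f => ∀ᶠ i in ↑U, (M i).val p (f i))
    (fun f g h => propext (eventually_congr (h.mono fun i hi => by rw [hi])))
  rel r := Quotient.lift₂ (fun f g => ∀ᶠ i in ↑U, (M i).rel r (f i) (g i))
    (fun _ _ _ _ hf hg => propext (eventually_congr ((hf.and hg).mono fun i hi => by
      rw [hi.1, hi.2])))

theorem uModel_val (p : P) (f : ∀ i, W i) :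
    (uModel U M).val p (Quotient.mk (uSetoid U W) f) ↔ ∀ᶠ i in ↑U, (M i).val p (f i) :=
  Iff.rfl

theorem uModel_rel (r : R) (f g : ∀ i, W i) :
    (uModel U M).rel r (Quotient.mk (uSetoid U W) f) (Quotient.mk (uSetoid U W) g)
      ↔ ∀ᶠ i in ↑U, (M i).rel r (f i) (g i) :=
  Iff.rfl

/-- Łoś's theorem for `fsat`. -/
theorem los (hne : ∀ i, Nonempty (W i)) (φ : FO P R) :
    ∀ F : ℕ → ∀ i, W i,
      fsat (uModel U M) (fun x => Quotient.mk (uSetoid U W) (F x)) φ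
        ↔ ∀ᶠ i in ↑U, fsat (M i) (fun x => F x i) φ := by
  induction φ with
  | top => intro F; simp [fsat]
  | eq x y =>
    intro F
    show Quotient.mk _ (F x) = Quotient.mk _ (F y) ↔ _
    constructor
    · exact fun h => Quotient.exact h
    · exact fun h => Quotient.sound h
  | atom p x => intro F; exact Iff.rfl
  | rel r x y => intro F; exact Iff.rfl
  | neg φ ih =>
    intro F
    show ¬ _ ↔ _
    rw [ih F, ← Ultrafilter.eventually_not]
    exact Iff.rfl
  | and φ ψ ihφ ihψ =>
    intro F
    show (_ ∧ _) ↔ _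
    rw [ihφ F, ihψ F, ← eventually_and]
    exact Iff.rfl
  | ex x φ ih =>
    intro F
    show (∃ v, fsat _ (Function.update _ x v) φ) ↔ _
    constructor
    · rintro ⟨v, hv⟩
      obtain ⟨g, rfl⟩ := Quotient.exists_rep v
      have hup : Function.update (fun y => Quotient.mk (uSetoid U W) (F y)) x
            (Quotient.mk (uSetoid U W) g)
          = fun y => Quotient.mk (uSetoid U W) (Function.update F x g y) := by
        funext y
        by_cases hy : y = x
        · subst hy; simp
        · simp [Function.update_of_ne hy]
      rw [hup] at hv
      have := (ih _).1 hv
      refine this.mono fun i hi => ⟨g i, ?_⟩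
      have : (fun y => Function.update F x g y i)
          = Function.update (fun y => F y i) x (g i) := by
        funext y
        by_cases hy : y = x
        · subst hy; simp
        · simp [Function.update_of_ne hy]
      rwa [this] at hi
    · intro h
      classical
      set g : ∀ i, W i := fun i =>
        if hex : ∃ v, fsat (M i) (Function.update (fun y => F y i) x v) φ
        then hex.choose else (hne i).some with hg
      refine ⟨Quotient.mk (uSetoid U W) g, ?_⟩
      have hup : Function.update (fun y => Quotient.mk (uSetoid U W) (F y)) x
            (Quotient.mk (uSetoid U W) g)
          = fun y => Quotient.mk (uSetoid U W) (Function.update F x g y) := by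
        funext y
        by_cases hy : y = x
        · subst hy; simp
        · simp [Function.update_of_ne hy]
      rw [hup]
      apply (ih _).2
      refine h.mono fun i hi => ?_
      have hi' : ∃ v, fsat (M i) (Function.update (fun y => F y i) x v) φ := hi
      have hgi : fsat (M i) (Function.update (fun y => F y i) x (g i)) φ := by
        rw [hg]; beta_reduce; rw [dif_pos hi']
        exact hi'.choose_spec
      have : (fun y => Function.update F x g y i)
          = Function.update (fun y => F y i) x (g i) := by
        funext y
        by_cases hy : y = x
        · subst hy; simp
        · simp [Function.update_of_ne hy]
      rwa [this]

/-- Łoś-type transfer for modal types. -/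
theorem typeOf_los (hne : ∀ i, Nonempty (W i)) [Finite P] [Finite R] :
    ∀ (n : ℕ) (F : ∀ i, W i) (σ : TypeN P R n),
      (∀ᶠ i in ↑U, typeOf (M i) n (F i) = σ) →
        typeOf (uModel U M) n (Quotient.mk (uSetoid U W) F) = σ := by
  intro n
  induction n with
  | zero =>
    intro F σ h
    funext p
    apply propext
    constructor
    · intro hval
      have hv : (∀ᶠ i in ↑U, (M i).val p (F i)) := hval
      obtain ⟨i, hi1, hi2⟩ := (hv.and h).exists
      rw [← congrFun hi2 p]
      exact hi1
    · intro hσ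
      show ∀ᶠ i in ↑U, (M i).val p (F i)
      refine h.mono fun i hi => ?_
      have := congrFun hi p
      rw [show (typeOf (M i) 0 (F i)) p = (M i).val p (F i) from rfl] at this
      rw [this]; exact hσ
  | succ n ih =>
    intro F σ h
    -- forward direction at level n, derived from ih
    have fwd : ∀ (G : ∀ i, W i) (τ : TypeN P R n),
        typeOf (uModel U M) n (Quotient.mk (uSetoid U W) G) = τ →
          ∀ᶠ i in ↑U, typeOf (M i) n (G i) = τ := by
      intro G τ hτ
      obtain ⟨τ', hτ'⟩ := ultra_exists_eq U (fun i => typeOf (M i) n (G i))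
      have := ih G τ' hτ'
      rw [hτ] at this
      rw [this]
      exact hτ'
    obtain ⟨σ₁, S⟩ := σ
    have h1 : ∀ᶠ i in ↑U, typeOf (M i) n (F i) = σ₁ :=
      h.mono fun i hi => congrArg Prod.fst hi
    have h2 : ∀ᶠ i in ↑U,
        (fun r τ => ∃ v, (M i).rel r (F i) v ∧ typeOf (M i) n v = τ) = S :=
      h.mono fun i hi => congrArg Prod.snd hi
    show (⟨typeOf (uModel U M) n (Quotient.mk (uSetoid U W) F),
      fun r τ => ∃ v, (uModel U M).rel r (Quotient.mk (uSetoid U W) F) v ∧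
        typeOf (uModel U M) n v = τ⟩ : TypeN P R (n+1)) = (σ₁, S)
    refine Prod.ext (ih F σ₁ h1) ?_
    funext r τ
    apply propext
    constructor
    · rintro ⟨v, hrel, hty⟩
      obtain ⟨g, rfl⟩ := Quotient.exists_rep v
      have hrel' : ∀ᶠ i in ↑U, (M i).rel r (F i) (g i) := hrel
      have hty' : ∀ᶠ i in ↑U, typeOf (M i) n (g i) = τ := fwd g τ hty
      have : ∀ᶠ _i in (U : Filter ℕ), S r τ := by
        refine ((hrel'.and hty').and h2).mono fun i ⟨⟨ha, hb⟩, hc⟩ => ?_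
        rw [← congrFun (congrFun hc r) τ]
        exact ⟨g i, ha, hb⟩
      obtain ⟨i, hi⟩ := this.exists
      exact hi
    · intro hS
      classical
      have hex : ∀ᶠ i in ↑U, ∃ v, (M i).rel r (F i) v ∧ typeOf (M i) n v = τ :=
        h2.mono fun i hi => by rw [congrFun (congrFun hi r) τ]; exact hS
      set g : ∀ i, W i := fun i =>
        if he : ∃ v, (M i).rel r (F i) v ∧ typeOf (M i) n v = τ
        then he.choose else (hne i).some with hg
      have hga : ∀ᶠ i in ↑U, (M i).rel r (F i) (g i) ∧ typeOf (M i) n (g i) = τ :=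
        hex.mono fun i hi => by
          rw [hg]; beta_reduce; rw [dif_pos hi]; exact hi.choose_spec
      refine ⟨Quotient.mk (uSetoid U W) g, ?_, ?_⟩
      · exact hga.mono fun i hi => hi.1
      · exact ih g τ (hga.mono fun i hi => hi.2)

end Aux
/-- if a class 𝓗 of pointed models is definable by a first-order theory
T (membership depends only on the model satisfying T, not on the point) and a
(Π,ℛ)-automaton A converges in 𝓗, then A specifies a local algorithm in 𝓗: there
is n such that A accepts or rejects every member of 𝓗 within n rounds. -/
theorem stmt_9 (P R : Type) [Finite P] [Finite R]
    (H : ∀ W : Type, KModel P R W → W → Prop)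
    (T : Set (FO P R))
    (hdef : ∀ (W : Type) (M : KModel P R W) (w : W),
        H W M w ↔ ∀ φ ∈ T, ∀ f : ℕ → W, fsat M f φ)
    (Q Msg : Type) (A : MPA P R Q Msg)
    (hconv : ∀ (W : Type) (M : KModel P R W) (w : W),
        H W M w → A.accepts M w ∨ A.rejects M w) :
    ∃ n : ℕ, ∀ (W : Type) (M : KModel P R W) (w : W), H W M w →
      ∃ m ≤ n, A.acceptsAt M w m ∨ A.rejectsAt M w m := by
  classical
  by_contra hno
  push_neg at hno
  choose Ws Ms ws hH hbad using hno
  let U : Ultrafilter ℕ := Ultrafilter.of Filter.cofinite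
  have hUc : (U : Filter ℕ) ≤ Filter.cofinite := Ultrafilter.of_le _
  have hne : ∀ i, Nonempty (Ws i) := fun i => ⟨ws i⟩
  set Mstar := uModel U Ms with hMstar
  set wstar := Quotient.mk (uSetoid U Ws) (fun i => ws i) with hwstar
  have hMi : ∀ i, ∀ φ ∈ T, ∀ f, fsat (Ms i) f φ := fun i => (hdef _ _ _).1 (hH i)
  have hHstar : H (UProd U Ws) Mstar wstar := by
    rw [hdef]
    intro φ hφ f
    have hrep : ∀ x, ∃ F, Quotient.mk (uSetoid U Ws) F = f x := fun x => Quotient.exists_rep _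
    choose F hF using hrep
    have hfF : f = fun x => Quotient.mk (uSetoid U Ws) (F x) := funext fun x => (hF x).symm
    rw [hfF]
    exact (los U Ms hne φ F).2 (Filter.Eventually.of_forall fun i => hMi i φ hφ _)
  have hrun : ∀ m, ∀ᶠ i in (U : Filter ℕ), A.run (Ms i) m (ws i) = A.run Mstar m wstar := by
    intro m
    obtain ⟨σ, hσ⟩ := ultra_exists_eq U (fun i => typeOf (Ms i) m (ws i))
    have hst : typeOf Mstar m wstar = σ := typeOf_los U Ms hne m _ σ hσ
    exact hσ.mono fun i hi => run_eq_of_typeOf A _ _ m _ _ (hi.trans hst.symm)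
  have hfin : ∀ k, ∃ i, k ≤ i ∧ ∀ m ≤ k, A.run (Ms i) m (ws i) = A.run Mstar m wstar := by
    intro k
    have hall : ∀ᶠ i in (U : Filter ℕ), ∀ m ∈ Finset.range (k+1),
        A.run (Ms i) m (ws i) = A.run Mstar m wstar :=
      (Filter.eventually_all_finset _).2 fun m _ => hrun m
    have hcof : ∀ᶠ i in (Filter.cofinite : Filter ℕ), k ≤ i := by
      rw [Nat.cofinite_eq_atTop]
      exact Filter.eventually_atTop.2 ⟨k, fun i hi => hi⟩
    have hk : ∀ᶠ i in (U : Filter ℕ), k ≤ i := hcof.filter_mono hUc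
    obtain ⟨i, hik, hirun⟩ := (hk.and hall).exists
    exact ⟨i, hik, fun m hm => hirun m (Finset.mem_range.2 (Nat.lt_succ_of_le hm))⟩
  rcases hconv _ Mstar wstar hHstar with ⟨k, hacc⟩ | ⟨k, hrej⟩
  · obtain ⟨i, hik, hirun⟩ := hfin k
    have hacc' : A.acceptsAt (Ms i) (ws i) k := by
      constructor
      · rw [hirun k le_rfl]; exact hacc.1
      · intro m hm
        rw [hirun m hm.le]; exact hacc.2 m hm
    exact (hbad i k hik).1 hacc'
  · obtain ⟨i, hik, hirun⟩ := hfin k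
    have hrej' : A.rejectsAt (Ms i) (ws i) k := by
      constructor
      · rw [hirun k le_rfl]; exact hrej.1
      · intro m hm
        rw [hirun m hm.le]; exact hrej.2 m hm
    exact (hbad i k hik).2 hrej'
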